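/- For every real $n > 0$, $\int_0^n x\,g(x,n)\,dx < 0$, where $g(x,n) = \frac{n-2x}{f(x,n)}$ and $f(x,n) = (2x+1)(2(n-x)+1)(2x+3)(2(n-x)+3)$. (This follows because under the substitution $y = x - n/2$ the function $g$ is odd in $y$ with $y\,g < 0$ for $y \ne 0$.) -/

import Mathlib

/-- For every real `n > 0`, `∫_0^n x g(x,n) dx < 0`, where
`g(x,n) = (n-2x)/f(x,n)` and `f(x,n) = (2x+1)(2(n-x)+1)(2x+3)(2(n-x)+3)`. -/
theorem stmt13 (n : ℝ) (hn : 0 < n) :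
    (∫ x in (0 : ℝ)..n,
      x * ((n - 2 * x) /
        ((2 * x + 1) * (2 * (n - x) + 1) * (2 * x + 3) * (2 * (n - x) + 3)))) < 0 := by
  set D : ℝ → ℝ := fun x => (2*x+1)*(2*(n-x)+1)*(2*x+3)*(2*(n-x)+3) with hD
  set h : ℝ → ℝ := fun x => x * ((n - 2*x) / D x) with hh
  have hDpos : ∀ x ∈ Set.Icc (0:ℝ) n, 0 < D x := by
    intro x hx
    obtain ⟨h0, h1⟩ := hx
    exact mul_pos (mul_pos (mul_pos (by linarith : (0:ℝ) < 2*x+1)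
      (by linarith : (0:ℝ) < 2*(n-x)+1)) (by linarith : (0:ℝ) < 2*x+3))
      (by linarith : (0:ℝ) < 2*(n-x)+3)
  have hcontD : ContinuousOn D (Set.Icc (0:ℝ) n) := by fun_prop
  have hch : ContinuousOn h (Set.Icc (0:ℝ) n) := by
    apply ContinuousOn.mul (by fun_prop)
    exact ContinuousOn.div (by fun_prop) hcontD (fun x hx => (hDpos x hx).ne')
  have huIcc : Set.uIcc (0:ℝ) n = Set.Icc 0 n := Set.uIcc_of_le hn.le
  have hih : IntervalIntegrable h MeasureTheory.volume 0 n :=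
    (huIcc ▸ hch).intervalIntegrable
  have hih2 : IntervalIntegrable (fun x => h (n - x)) MeasureTheory.volume 0 n := by
    have := (hih.comp_sub_left n).symm
    simpa using this
  -- q is the nonnegative function
  set q : ℝ → ℝ := fun x => (n - 2*x)^2 / D x with hq
  have hcq : ContinuousOn q (Set.Icc (0:ℝ) n) :=
    ContinuousOn.div (by fun_prop) hcontD (fun x hx => (hDpos x hx).ne')
  have hpt : ∀ x, h x + h (n - x) = -q x := by
    intro x
    have hDe : D (n - x) = D x := by simp only [hD]; ring
    simp only [hh, hq, hDe]
    rw [← mul_div_assoc, ← mul_div_assoc, ← add_div, ← neg_div]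
    congr 1
    ring
  have hrefl : (∫ x in (0:ℝ)..n, h (n - x)) = ∫ x in (0:ℝ)..n, h x := by
    rw [intervalIntegral.integral_comp_sub_left h n]
    simp
  have hsum : (∫ x in (0:ℝ)..n, h x) + (∫ x in (0:ℝ)..n, h x)
      = -∫ x in (0:ℝ)..n, q x := by
    nth_rewrite 2 [← hrefl]
    rw [← intervalIntegral.integral_add hih hih2,
      ← intervalIntegral.integral_neg]
    exact intervalIntegral.integral_congr (fun x _ => hpt x)
  -- now show ∫ q > 0
  have hsub1 : Set.uIcc (0:ℝ) (n/2) ⊆ Set.Icc 0 n := by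
    rw [Set.uIcc_of_le (by linarith)]
    exact Set.Icc_subset_Icc le_rfl (by linarith)
  have hsub2 : Set.uIcc (n/2) n ⊆ Set.Icc 0 n := by
    rw [Set.uIcc_of_le (by linarith)]
    exact Set.Icc_subset_Icc (by linarith) le_rfl
  have hiq1 : IntervalIntegrable q MeasureTheory.volume 0 (n/2) :=
    (hcq.mono hsub1).intervalIntegrable
  have hiq2 : IntervalIntegrable q MeasureTheory.volume (n/2) n :=
    (hcq.mono hsub2).intervalIntegrable
  have hqpos : (0:ℝ) < ∫ x in (0:ℝ)..(n/2), q x := by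
    apply intervalIntegral.intervalIntegral_pos_of_pos_on hiq1 _ (by linarith)
    intro x hx
    have hx0 : 0 ≤ x := hx.1.le
    have hxn : x ≤ n := by have := hx.2; linarith
    have hnum : 0 < (n - 2*x)^2 := by
      have : n - 2*x > 0 := by have := hx.2; linarith
      positivity
    exact div_pos hnum (hDpos x ⟨hx0, hxn⟩)
  have hqnn : (0:ℝ) ≤ ∫ x in (n/2)..n, q x := by
    apply intervalIntegral.integral_nonneg (by linarith)
    intro x hx
    have hx0 : 0 ≤ x := by have := hx.1; linarith
    exact div_nonneg (sq_nonneg _) (hDpos x ⟨hx0, hx.2⟩).le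
  have hsplit : (∫ x in (0:ℝ)..(n/2), q x) + (∫ x in (n/2)..n, q x)
      = ∫ x in (0:ℝ)..n, q x :=
    intervalIntegral.integral_add_adjacent_intervals hiq1 hiq2
  have hJ : (0:ℝ) < ∫ x in (0:ℝ)..n, q x := by linarith
  show (∫ x in (0:ℝ)..n, h x) < 0
  linarith
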